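/- Let $n \in \mathbb{N}$ and let $\lambda_1, \dots, \lambda_n$ be real numbers with $H = \sum_{i=1}^n \lambda_i$. If $\lambda_i (H - \lambda_i) > 0$ for every $i = 1, \dots, n$, then either $\lambda_i > 0$ for all $i$, or $\lambda_i < 0$ for all $i$. -/
import Mathlib

open Finset

/-- The algebraic core of Lemma 4.1: if real numbers `λ₁, …, λₙ` with sum `H` satisfy
`λᵢ (H - λᵢ) > 0` for every `i`, then either all `λᵢ` are positive or all are
negative. -/
theorem same_sign_of_ricci_positive (n : ℕ) (lam : Fin n → ℝ) (H : ℝ)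
    (hH : H = ∑ i, lam i) (hpos : ∀ i, lam i * (H - lam i) > 0) :
    (∀ i, lam i > 0) ∨ (∀ i, lam i < 0) := by
  rcases lt_trichotomy H 0 with h | h | h
  · right; intro i; by_contra hc; push_neg at hc; nlinarith [hpos i]
  · left; intro i; nlinarith [hpos i, sq_nonneg (lam i)]
  · left; intro i; by_contra hc; push_neg at hc; nlinarith [hpos i]
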